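/- For every p ∈ (0,1), the sequence n ↦ √(2π p (1−p) n) · C(n,⌊np⌋) p^{⌊np⌋} (1−p)^{n−⌊np⌋} converges to 1 as n → ∞. -/

import Mathlib

open Filter Finset Real

/-- The binomial probability mass function `B_n^i(p)`. -/
noncomputable def binPMF (p : ℝ) (n i : ℕ) : ℝ :=
  (n.choose i : ℝ) * p ^ i * (1 - p) ^ (n - i)

open Stirling Nat Topology
lemma one_sub_inv_le_log {x : ℝ} (hx : 0 < x) : 1 - x⁻¹ ≤ Real.log x := by
  have h := Real.log_le_sub_one_of_pos (x := x⁻¹) (by positivity)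
  rw [Real.log_inv] at h; linarith

lemma fact_eq (x : ℕ) (hx : 1 ≤ x) :
    (x ! : ℝ) = stirlingSeq x * (√(2 * x) * ((x : ℝ) / Real.exp 1) ^ x) := by
  have hne : (√(2 * x) * ((x : ℝ) / Real.exp 1) ^ x) ≠ 0 := by
    have : (0:ℝ) < x := by exact_mod_cast hx
    positivity
  rw [stirlingSeq, div_mul_cancel₀ _ hne]

lemma binPMF_eq (p : ℝ) (hp0 : 0 < p) (hp1 : p < 1) (n kk : ℕ) (h1 : 1 ≤ kk) (h2 : kk < n) :
    √(2 * π * p * (1 - p) * n) * binPMF p n kk =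
      stirlingSeq n / (stirlingSeq kk * stirlingSeq (n - kk)) *
        √(π * p * (1 - p) * (n : ℝ) ^ 2 / ((kk : ℝ) * ((n - kk : ℕ) : ℝ))) *
        (((n : ℝ) * p / kk) ^ kk * ((n : ℝ) * (1 - p) / ((n - kk : ℕ) : ℝ)) ^ (n - kk)) := by
  set m := n - kk with hmdef
  have hm : kk + m = n := Nat.add_sub_cancel' h2.le
  have hq0 : (0:ℝ) < 1 - p := by linarith
  have ha : (1:ℝ) ≤ kk := by exact_mod_cast h1
  have hb : (1:ℝ) ≤ m := by
    have : 1 ≤ m := by omega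
    exact_mod_cast this
  have hn : (0:ℝ) < n := by
    have : 0 < n := by omega
    exact_mod_cast this
  have ha0 : (0:ℝ) < kk := by linarith
  have hb0 : (0:ℝ) < m := by linarith
  have hcast : ((n:ℝ)) = (kk : ℝ) + m := by exact_mod_cast hm.symm
  have hsa := stirlingSeq'_pos (kk - 1)
  have hsb := stirlingSeq'_pos (m - 1)
  rw [show kk - 1 + 1 = kk by omega] at hsa
  rw [show m - 1 + 1 = m by omega] at hsb
  have hA : √(2 * π * p * (1 - p) * n) * √(2 * n) / (√(2 * kk) * √(2 * m)) =
      √(π * p * (1 - p) * (n : ℝ) ^ 2 / ((kk : ℝ) * (m : ℝ))) := by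
    rw [← Real.sqrt_mul (by positivity), ← Real.sqrt_mul (by positivity),
      ← Real.sqrt_div (by positivity)]
    congr 1
    field_simp
  have hB : ((n:ℝ) / Real.exp 1) ^ n / (((kk:ℝ) / Real.exp 1) ^ kk * ((m:ℝ) / Real.exp 1) ^ m)
      * (p ^ kk * (1 - p) ^ m) =
      ((n : ℝ) * p / kk) ^ kk * ((n : ℝ) * (1 - p) / (m : ℝ)) ^ m := by
    rw [← hm, pow_add]
    have he : Real.exp 1 ≠ 0 := Real.exp_ne_zero 1
    field_simp
    simp only [div_pow, mul_pow]
    field_simp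
  calc √(2 * π * p * (1 - p) * n) * binPMF p n kk
      = √(2 * π * p * (1 - p) * n) * ((n ! : ℝ) / ((kk ! : ℝ) * (m ! : ℝ)) * (p ^ kk * (1 - p) ^ m)) := by
        rw [binPMF, Nat.cast_choose ℝ h2.le, ← hmdef]; ring
    _ = stirlingSeq n / (stirlingSeq kk * stirlingSeq m) *
        (√(2 * π * p * (1 - p) * n) * √(2 * n) / (√(2 * kk) * √(2 * m))) *
        (((n:ℝ) / Real.exp 1) ^ n / (((kk:ℝ) / Real.exp 1) ^ kk * ((m:ℝ) / Real.exp 1) ^ m)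
          * (p ^ kk * (1 - p) ^ m)) := by
        rw [fact_eq n (by omega), fact_eq kk (by omega), fact_eq m (by omega)]
        have h2a : √(2 * (kk:ℝ)) ≠ 0 := by positivity
        have h2b : √(2 * (m:ℝ)) ≠ 0 := by positivity
        have hpa : ((kk:ℝ) / Real.exp 1) ^ kk ≠ 0 := by positivity
        have hpb : ((m:ℝ) / Real.exp 1) ^ m ≠ 0 := by positivity
        field_simp
    _ = _ := by rw [hA, hB]

set_option maxHeartbeats 2000000 in
set_option maxHeartbeats 2000000 in
theorem sqrt_mul_binPMF_floor_tendsto_one (p : ℝ) (hp0 : 0 < p) (hp1 : p < 1) :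
    Tendsto (fun n : ℕ =>
        Real.sqrt (2 * Real.pi * p * (1 - p) * n) * binPMF p n ⌊(n : ℝ) * p⌋₊)
      atTop (nhds 1) := by
  have hq0 : (0:ℝ) < 1 - p := by linarith
  set k : ℕ → ℕ := fun n => ⌊(n : ℝ) * p⌋₊ with hkdef
  have hkle : ∀ n : ℕ, k n ≤ n := by
    intro n
    calc k n ≤ ⌊(n:ℝ)⌋₊ := Nat.floor_mono (by nlinarith [Nat.cast_nonneg (α := ℝ) n])
    _ = n := Nat.floor_natCast n
  have hfl : ∀ n : ℕ, (k n : ℝ) ≤ (n:ℝ) * p := fun n => Nat.floor_le (by positivity)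
  have hfl' : ∀ n : ℕ, (n:ℝ) * p < (k n : ℝ) + 1 := fun n => Nat.lt_floor_add_one _
  have htk : Tendsto k atTop atTop :=
    tendsto_nat_floor_atTop.comp (tendsto_natCast_atTop_atTop.atTop_mul_const hp0)
  have htm : Tendsto (fun n => n - k n) atTop atTop := by
    refine tendsto_atTop_mono' atTop (Eventually.of_forall fun n => ?_)
      (tendsto_nat_floor_atTop.comp (tendsto_natCast_atTop_atTop.atTop_mul_const hq0))
    have h1 : ((n:ℝ)) * (1 - p) ≤ ((n - k n : ℕ) : ℝ) := by
      rw [Nat.cast_sub (hkle n)]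
      nlinarith [hfl n]
    calc ⌊(n:ℝ) * (1-p)⌋₊ ≤ ⌊((n - k n : ℕ) : ℝ)⌋₊ := Nat.floor_mono h1
    _ = n - k n := Nat.floor_natCast _
  -- eventual basic facts
  have hev : ∀ᶠ n : ℕ in atTop, 1 ≤ k n ∧ k n < n := by
    filter_upwards [htk.eventually_ge_atTop 1, eventually_ge_atTop 1] with n h1 h2
    refine ⟨h1, ?_⟩
    have : (k n : ℝ) < n := lt_of_le_of_lt (hfl n) (by nlinarith [show (1:ℝ) ≤ n by exact_mod_cast h2])
    exact_mod_cast this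
  -- Stirling factor
  have hπ : (0:ℝ) < √π := Real.sqrt_pos.mpr Real.pi_pos
  have hS : Tendsto (fun n => stirlingSeq n / (stirlingSeq (k n) * stirlingSeq (n - k n)))
      atTop (𝓝 (√π / (√π * √π))) :=
    Stirling.tendsto_stirlingSeq_sqrt_pi.div
      ((Stirling.tendsto_stirlingSeq_sqrt_pi.comp htk).mul
        (Stirling.tendsto_stirlingSeq_sqrt_pi.comp htm)) (by positivity)
  -- ratio limits
  have hr1 : Tendsto (fun n : ℕ => (k n : ℝ) / ((n:ℝ) * p)) atTop (𝓝 1) := by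
    refine tendsto_of_tendsto_of_tendsto_of_le_of_le'
      (g := fun n : ℕ => 1 - (1/p) / (n:ℝ)) (h := fun _ => (1:ℝ)) ?_ tendsto_const_nhds ?_ ?_
    · have := (tendsto_const_div_atTop_nhds_zero_nat (1/p)).const_sub 1
      simpa using this
    · filter_upwards [eventually_ge_atTop 1] with n hn
      have hn' : (0:ℝ) < n := by exact_mod_cast hn
      have h2 := hfl' n
      rw [le_div_iff₀ (by positivity)]
      have : (1/p) / (n:ℝ) = 1 / ((n:ℝ) * p) := by rw [div_div, mul_comm p (n:ℝ)]
      rw [this]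
      field_simp
      nlinarith
    · filter_upwards [eventually_ge_atTop 1] with n hn
      have hn' : (0:ℝ) < n := by exact_mod_cast hn
      rw [div_le_one (by positivity)]
      exact hfl n
  have hr2 : Tendsto (fun n : ℕ => ((n - k n : ℕ) : ℝ) / ((n:ℝ) * (1 - p))) atTop (𝓝 1) := by
    refine tendsto_of_tendsto_of_tendsto_of_le_of_le'
      (g := fun _ => (1:ℝ)) (h := fun n : ℕ => 1 + (1/(1-p)) / (n:ℝ)) tendsto_const_nhds ?_ ?_ ?_
    · have := (tendsto_const_div_atTop_nhds_zero_nat (1/(1-p))).const_add 1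
      simpa using this
    · filter_upwards [eventually_ge_atTop 1] with n hn
      have hn' : (0:ℝ) < n := by exact_mod_cast hn
      rw [le_div_iff₀ (by positivity), Nat.cast_sub (hkle n)]
      nlinarith [hfl n]
    · filter_upwards [eventually_ge_atTop 1] with n hn
      have hn' : (0:ℝ) < n := by exact_mod_cast hn
      rw [div_le_iff₀ (by positivity), Nat.cast_sub (hkle n)]
      have : (1/(1-p)) / (n:ℝ) = 1 / ((n:ℝ) * (1-p)) := by rw [div_div, mul_comm (1-p) (n:ℝ)]
      rw [this]
      have h2 := hfl' n
      field_simp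
      nlinarith
  -- G factor
  have hG : Tendsto (fun n : ℕ =>
      √(π * p * (1 - p) * (n : ℝ) ^ 2 / ((k n : ℝ) * ((n - k n : ℕ) : ℝ)))) atTop (𝓝 (√π)) := by
    have hI : Tendsto (fun n : ℕ =>
        π * p * (1 - p) * (n : ℝ) ^ 2 / ((k n : ℝ) * ((n - k n : ℕ) : ℝ))) atTop (𝓝 π) := by
      have h1 := ((hr1.inv₀ one_ne_zero).mul (hr2.inv₀ one_ne_zero)).const_mul π
      simp only [inv_one, mul_one] at h1
      refine h1.congr' ?_
      filter_upwards [hev, eventually_ge_atTop 1] with n ⟨hk1, hk2⟩ hn1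
      have hn' : (0:ℝ) < n := by exact_mod_cast hn1
      have ha0 : (0:ℝ) < (k n : ℝ) := by exact_mod_cast hk1
      have hb0 : (0:ℝ) < ((n - k n : ℕ) : ℝ) := by
        have : 1 ≤ n - k n := by omega
        exact_mod_cast this
      field_simp
    exact hI.sqrt
  -- E factor
  have hE : Tendsto (fun n : ℕ =>
      ((n : ℝ) * p / (k n : ℝ)) ^ (k n) *
        ((n : ℝ) * (1 - p) / ((n - k n : ℕ) : ℝ)) ^ (n - k n)) atTop (𝓝 1) := by
    have hL : Tendsto (fun n : ℕ =>
        (k n : ℝ) * Real.log ((n:ℝ) * p / (k n : ℝ)) +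
          ((n - k n : ℕ) : ℝ) * Real.log ((n:ℝ) * (1 - p) / ((n - k n : ℕ) : ℝ)))
        atTop (𝓝 0) := by
      refine tendsto_of_tendsto_of_tendsto_of_le_of_le'
        (g := fun n : ℕ => -((1/p) / (n:ℝ)) - (1/(1-p)) / (n:ℝ)) (h := fun _ => (0:ℝ))
        ?_ tendsto_const_nhds ?_ ?_
      · have := ((tendsto_const_div_atTop_nhds_zero_nat (1/p)).neg).sub
          (tendsto_const_div_atTop_nhds_zero_nat (1/(1-p)))
        simpa using this
      · -- lower bound
        filter_upwards [hev, eventually_ge_atTop 1] with n ⟨hk1, hk2⟩ hn1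
        have hn' : (0:ℝ) < n := by exact_mod_cast hn1
        have ha0 : (0:ℝ) < (k n : ℝ) := by exact_mod_cast hk1
        have hb0 : (0:ℝ) < ((n - k n : ℕ) : ℝ) := by
          have : 1 ≤ n - k n := by exact Nat.sub_pos_of_lt hk2
          exact_mod_cast this
        set a := (k n : ℝ)
        set b := ((n - k n : ℕ) : ℝ) with hbdef
        have hab : a + b = (n:ℝ) := by
          rw [hbdef, Nat.cast_sub (hkle n)]; ring
        set A := (n:ℝ) * p with hA
        set B := (n:ℝ) * (1 - p) with hB
        have hA0 : 0 < A := by positivity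
        have hB0 : 0 < B := by positivity
        have hABn : A + B = (n:ℝ) := by rw [hA, hB]; ring
        have hθ0 : 0 ≤ A - a := by have := hfl n; simpa [hA] using sub_nonneg.mpr this
        have hθ1 : A - a < 1 := by have := hfl' n; simp only [hA]; linarith
        have hlog1 : 1 - (A/a)⁻¹ ≤ Real.log (A/a) := one_sub_inv_le_log (by positivity)
        have hlog2 : 1 - (B/b)⁻¹ ≤ Real.log (B/b) := one_sub_inv_le_log (by positivity)
        have e1 : a * (1 - (A/a)⁻¹) = a * (A - a) / A := by field_simp
        have e2 : b * (1 - (B/b)⁻¹) = b * (B - b) / B := by field_simp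
        have i1 : a * (1 - (A/a)⁻¹) ≤ a * Real.log (A/a) :=
          mul_le_mul_of_nonneg_left hlog1 ha0.le
        have i2 : b * (1 - (B/b)⁻¹) ≤ b * Real.log (B/b) :=
          mul_le_mul_of_nonneg_left hlog2 hb0.le
        have j1 : (A - a) - 1/A ≤ a * (A - a) / A := by
          have : a * (A - a) / A - ((A - a) - 1/A) = (1 - (A - a)^2) / A := by
            field_simp; ring
          linarith [div_nonneg (by nlinarith : (0:ℝ) ≤ 1 - (A - a)^2) hA0.le]
        have hBb : b - B = A - a := by linarith
        have hθ0' : 0 ≤ b - B := by linarith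
        have hθ1' : b - B < 1 := by linarith
        have j2 : -(A - a) - 1/B ≤ b * (B - b) / B := by
          have : b * (B - b) / B - (-(b - B) - 1/B) = (1 - (b - B)^2) / B := by
            field_simp; ring
          linarith [div_nonneg (by nlinarith : (0:ℝ) ≤ 1 - (b - B)^2) hB0.le]
        have hr1' : (1/p) / (n:ℝ) = 1 / A := by rw [hA, div_div, mul_comm p (n:ℝ)]
        have hr2' : (1/(1-p)) / (n:ℝ) = 1 / B := by rw [hB, div_div, mul_comm (1-p) (n:ℝ)]
        rw [hr1', hr2']
        have := (j1.trans (e1 ▸ i1))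
        have := (j2.trans (e2 ▸ i2))
        linarith
      · -- upper bound
        filter_upwards [hev, eventually_ge_atTop 1] with n ⟨hk1, hk2⟩ hn1
        have hn' : (0:ℝ) < n := by exact_mod_cast hn1
        have ha0 : (0:ℝ) < (k n : ℝ) := by exact_mod_cast hk1
        have hb0 : (0:ℝ) < ((n - k n : ℕ) : ℝ) := by
          have : 1 ≤ n - k n := Nat.sub_pos_of_lt hk2
          exact_mod_cast this
        set a := (k n : ℝ)
        set b := ((n - k n : ℕ) : ℝ) with hbdef
        have hab : a + b = (n:ℝ) := by
          rw [hbdef, Nat.cast_sub (hkle n)]; ring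
        have hlog1 : Real.log ((n:ℝ)*p/a) ≤ (n:ℝ)*p/a - 1 :=
          Real.log_le_sub_one_of_pos (by positivity)
        have hlog2 : Real.log ((n:ℝ)*(1-p)/b) ≤ (n:ℝ)*(1-p)/b - 1 :=
          Real.log_le_sub_one_of_pos (by positivity)
        have i1 : a * Real.log ((n:ℝ)*p/a) ≤ a * ((n:ℝ)*p/a - 1) :=
          mul_le_mul_of_nonneg_left hlog1 ha0.le
        have i2 : b * Real.log ((n:ℝ)*(1-p)/b) ≤ b * ((n:ℝ)*(1-p)/b - 1) :=
          mul_le_mul_of_nonneg_left hlog2 hb0.le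
        have e1 : a * ((n:ℝ)*p/a - 1) = (n:ℝ)*p - a := by field_simp
        have e2 : b * ((n:ℝ)*(1-p)/b - 1) = (n:ℝ)*(1-p) - b := by field_simp
        rw [e1] at i1; rw [e2] at i2
        nlinarith
    have hexp : Tendsto (fun n : ℕ => Real.exp
        ((k n : ℝ) * Real.log ((n:ℝ) * p / (k n : ℝ)) +
          ((n - k n : ℕ) : ℝ) * Real.log ((n:ℝ) * (1 - p) / ((n - k n : ℕ) : ℝ))))
        atTop (𝓝 1) := by
      have := (Real.continuous_exp.tendsto 0).comp hL
      simpa [Function.comp_def] using this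
    refine hexp.congr' ?_
    filter_upwards [hev, eventually_ge_atTop 1] with n ⟨hk1, hk2⟩ hn1
    have hn' : (0:ℝ) < n := by exact_mod_cast hn1
    have ha0 : (0:ℝ) < (k n : ℝ) := by exact_mod_cast hk1
    have hb0 : (0:ℝ) < ((n - k n : ℕ) : ℝ) := by
      have : 1 ≤ n - k n := Nat.sub_pos_of_lt hk2
      exact_mod_cast this
    rw [Real.exp_add, Real.exp_nat_mul, Real.exp_nat_mul,
      Real.exp_log (by positivity), Real.exp_log (by positivity)]
  -- combine
  have hfinal := (hS.mul hG).mul hE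
  have hc : √π / (√π * √π) * √π * 1 = 1 := by field_simp
  rw [hc] at hfinal
  refine hfinal.congr' ?_
  filter_upwards [hev] with n ⟨hk1, hk2⟩
  exact (binPMF_eq p hp0 hp1 n (k n) hk1 hk2).symm
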